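/- arXiv:2403.14196 — 5 statements merged into one kernel-verified Lean document; each statement's English description precedes it below -/
import Mathlib

section
/- Let A be a p×n complex matrix and W a nonzero n×p complex matrix. Suppose X₁ and X₂ are p×n matrices each satisfying: X·W·A·W·X = X, A·W·X₁ = A·W·X₂, and X₁·W·A = X₂·W·A. Then X₁ = X₂. -/
open Matrix

theorem stmt_2 {p n : ℕ} (A X₁ X₂ : Matrix (Fin p) (Fin n) ℂ)
    (W : Matrix (Fin n) (Fin p) ℂ) (hW : W ≠ 0)
    (h1 : X₁ * W * A * W * X₁ = X₁) (h2 : X₂ * W * A * W * X₂ = X₂)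
    (h3 : A * W * X₁ = A * W * X₂) (h4 : X₁ * W * A = X₂ * W * A) :
    X₁ = X₂ := by
  calc X₁ = X₁ * W * A * W * X₁ := h1.symm
    _ = X₂ * W * A * W * X₂ := by
        rw [h4, Matrix.mul_assoc (X₂ * W) A W, Matrix.mul_assoc (X₂ * W) (A * W) X₁, h3,
          ← Matrix.mul_assoc (X₂ * W) (A * W) X₂, ← Matrix.mul_assoc (X₂ * W) A W]
    _ = X₂ := h2
end

section
/- Let A be a p×n complex matrix, W a nonzero n×p complex matrix, k = max{Ind(AW), Ind(WA)}, m a positive integer, and let G = A^{w_m,W} denote the W-weighted m-weak group inverse of A (the unique solution of AWG = (A^{⊕,W}W)^m (AW)^{m-1} A and AWGWG = G). Define X = G · P, where P is the orthogonal projector onto range((WA)^m). Then X·W·A·W·X = X. -/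
open Matrix

/-- `P` is the orthogonal projector onto the subspace `S`. -/
def IsOrthProjOnto {p : ℕ} (P : Matrix (Fin p) (Fin p) ℂ)
    (S : Submodule ℂ (Fin p → ℂ)) : Prop :=
  P * P = P ∧ Pᴴ = P ∧ LinearMap.range P.mulVecLin = S

/-- `k` is the index of the square matrix `M`. -/
def MatIndex {p : ℕ} (M : Matrix (Fin p) (Fin p) ℂ) (k : ℕ) : Prop :=
  (M ^ k).rank = (M ^ (k + 1)).rank ∧
    ∀ j, (M ^ j).rank = (M ^ (j + 1)).rank → k ≤ j

private lemma factor_of_range_le {p q r : ℕ} (M : Matrix (Fin p) (Fin q) ℂ)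
    (N : Matrix (Fin p) (Fin r) ℂ)
    (h : LinearMap.range N.mulVecLin ≤ LinearMap.range M.mulVecLin) :
    ∃ T : Matrix (Fin q) (Fin r) ℂ, N = M * T := by
  have hcol : ∀ j, ∃ v, M.mulVec v = N.mulVec (Pi.single j 1) := fun j => by
    obtain ⟨v, hv⟩ := h (LinearMap.mem_range_self N.mulVecLin (Pi.single j 1))
    exact ⟨v, by simpa [Matrix.mulVecLin_apply] using hv⟩
  choose v hv using hcol
  refine ⟨Matrix.of (fun i j => v j i), ?_⟩
  ext i j
  have h2 := congrFun (hv j) i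
  simp only [Matrix.mulVec_single, mul_one, MulOpposite.op_one, one_smul, Matrix.col_apply] at h2
  rw [← h2]
  simp [Matrix.mul_apply, Matrix.mulVec, dotProduct]

private lemma proj_absorb {q r : ℕ} {P : Matrix (Fin q) (Fin q) ℂ}
    {M : Matrix (Fin q) (Fin r) ℂ}
    (hP : P * P = P) (h : LinearMap.range M.mulVecLin ≤ LinearMap.range P.mulVecLin) :
    P * M = M := by
  obtain ⟨T, rfl⟩ := factor_of_range_le P M h
  rw [← Matrix.mul_assoc, hP]

private lemma range_mul_le {a b c : ℕ} (M : Matrix (Fin a) (Fin b) ℂ)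
    (N : Matrix (Fin b) (Fin c) ℂ) :
    LinearMap.range (M * N).mulVecLin ≤ LinearMap.range M.mulVecLin := by
  rw [Matrix.mulVecLin_mul]
  exact LinearMap.range_comp_le_range _ _

private lemma matrix_eq_zero_of_mulVec {a b : ℕ} (M : Matrix (Fin a) (Fin b) ℂ)
    (h : ∀ v, M.mulVec v = 0) : M = 0 := by
  ext i j
  have h2 := congrFun (h (Pi.single j 1)) i
  simpa using h2

private lemma swap_pow {a b : ℕ} (U : Matrix (Fin a) (Fin b) ℂ)
    (V : Matrix (Fin b) (Fin a) ℂ) (j : ℕ) :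
    U * (V * U) ^ j = (U * V) ^ j * U := by
  induction j with
  | zero => simp
  | succ i ih =>
    calc U * (V * U) ^ (i + 1) = (U * (V * U)) * (V * U) ^ i := by
          rw [pow_succ', ← Matrix.mul_assoc]
      _ = ((U * V) * U) * (V * U) ^ i := by rw [← Matrix.mul_assoc]
      _ = (U * V) * (U * (V * U) ^ i) := by rw [Matrix.mul_assoc]
      _ = (U * V) * ((U * V) ^ i * U) := by rw [ih]
      _ = ((U * V) * (U * V) ^ i) * U := by rw [← Matrix.mul_assoc]
      _ = (U * V) ^ (i + 1) * U := by rw [← pow_succ']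

private lemma ker_pow_stab {q : ℕ} (M : Matrix (Fin q) (Fin q) ℂ) (t : ℕ)
    (h : (M ^ t).rank = (M ^ (t + 1)).rank) :
    ∀ j v, (M ^ (t + j)).mulVec v = 0 → (M ^ t).mulVec v = 0 := by
  have key : LinearMap.ker (M ^ (t + 1)).mulVecLin = LinearMap.ker (M ^ t).mulVecLin := by
    have hle : LinearMap.ker (M ^ t).mulVecLin ≤ LinearMap.ker (M ^ (t + 1)).mulVecLin := by
      intro v hv
      simp only [LinearMap.mem_ker, Matrix.mulVecLin_apply] at hv ⊢
      rw [pow_succ', ← Matrix.mulVec_mulVec, hv, Matrix.mulVec_zero]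
    have h1 := LinearMap.finrank_range_add_finrank_ker (M ^ t).mulVecLin
    have h2 := LinearMap.finrank_range_add_finrank_ker (M ^ (t + 1)).mulVecLin
    unfold Matrix.rank at h
    refine (Submodule.eq_of_le_of_finrank_le hle ?_).symm
    omega
  intro j
  induction j with
  | zero => intro v hv; simpa using hv
  | succ i ih =>
    intro v hv
    have h1 : (M ^ (t + i)).mulVec (M.mulVec v) = 0 := by
      rw [Matrix.mulVec_mulVec, ← pow_succ]
      have e : t + i + 1 = t + (i + 1) := by omega
      rw [e]; exact hv
    have h2 := ih (M.mulVec v) h1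
    have h3 : (M ^ (t + 1)).mulVec v = 0 := by
      rw [pow_succ, ← Matrix.mulVec_mulVec]; exact h2
    have h4 : v ∈ LinearMap.ker (M ^ (t + 1)).mulVecLin := by
      simpa [LinearMap.mem_ker, Matrix.mulVecLin_apply] using h3
    rw [key] at h4
    simpa [LinearMap.mem_ker, Matrix.mulVecLin_apply] using h4

private lemma ker_pow_le' {q : ℕ} (M : Matrix (Fin q) (Fin q) ℂ) (t a b : ℕ)
    (h : (M ^ t).rank = (M ^ (t + 1)).rank) (hta : t ≤ a) (hab : a ≤ b)
    (v : Fin q → ℂ) (hv : (M ^ b).mulVec v = 0) : (M ^ a).mulVec v = 0 := by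
  obtain ⟨e, rfl⟩ : ∃ e, b = t + e := ⟨b - t, by omega⟩
  have ht := ker_pow_stab M t h e v hv
  obtain ⟨d, rfl⟩ : ∃ d, a = t + d := ⟨a - t, by omega⟩
  have hMd : M ^ (t + d) = M ^ d * M ^ t := by rw [← pow_add]; congr 1; omega
  rw [hMd, ← Matrix.mulVec_mulVec, ht, Matrix.mulVec_zero]

private lemma mono_aux {M₀ : Type*} [Monoid M₀] (B Q Pk : M₀)
    (f1 : B * Q = Pk) (f2 : Pk * Q = Q) : ∀ j, B ^ (j + 1) * Q ^ (j + 1) = Pk := by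
  intro j
  induction j with
  | zero => simpa using f1
  | succ i ih =>
    have h1 : B ^ (i + 1 + 1) = B * B ^ (i + 1) := pow_succ' B (i + 1)
    have h2 : Q ^ (i + 1 + 1) = Q ^ (i + 1) * Q := pow_succ Q (i + 1)
    calc B ^ (i + 1 + 1) * Q ^ (i + 1 + 1)
        = B * (B ^ (i + 1) * Q ^ (i + 1) * Q) := by rw [h1, h2]; simp only [mul_assoc]
      _ = B * (Pk * Q) := by rw [ih]
      _ = Pk := by rw [f2, f1]

private lemma mono_aux2 {M₀ : Type*} [Monoid M₀] (B Q : M₀) (h : Q = B * (Q * Q)) :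
    ∀ j, Q = B ^ j * Q ^ (j + 1) := by
  intro j
  induction j with
  | zero => simp
  | succ i ih =>
    have e : Q ^ (i + 1) = B * Q ^ (i + 1 + 1) := by
      calc Q ^ (i + 1) = Q * Q ^ i := pow_succ' Q i
        _ = (B * (Q * Q)) * Q ^ i := by rw [← h]
        _ = B * (Q * (Q * Q ^ i)) := by simp only [mul_assoc]
        _ = B * (Q * Q ^ (i + 1)) := by rw [← pow_succ' Q i]
        _ = B * Q ^ (i + 1 + 1) := by rw [← pow_succ' Q (i + 1)]
    calc Q = B ^ i * Q ^ (i + 1) := ih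
      _ = B ^ i * (B * Q ^ (i + 1 + 1)) := by rw [e]
      _ = (B ^ i * B) * Q ^ (i + 1 + 1) := by rw [← mul_assoc]
      _ = B ^ (i + 1) * Q ^ (i + 1 + 1) := by rw [← pow_succ]

private lemma mono_main {M₀ : Type*} [Monoid M₀] (B Q Pk g : M₀) (m' : ℕ)
    (f1 : B * Q = Pk) (f2 : Pk * Q = Q) (f3 : Q * Pk = Q)
    (hBg : B * g = Q ^ (m' + 1) * B ^ (m' + 1))
    (hgfix : Q ^ (m' + 1) * B ^ (m' + 1) * g = g) :
    g * (B * g) = g ∧ ∃ C, B * g = B ^ (m' + 1) * C := by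
  have fBQ2 : B * (Q * Q) = Q := by rw [← mul_assoc, f1, f2]
  have fQpow := mono_aux2 B Q fBQ2.symm
  have fPkj := mono_aux B Q Pk f1 f2
  have fQmPk : Q ^ (m' + 1) * Pk = Q ^ (m' + 1) := by
    rw [pow_succ Q m', mul_assoc, f3]
  have hBmg : B ^ (m' + 1) * g = B ^ m' * (Q ^ (m' + 1) * B ^ (m' + 1)) := by
    conv_lhs => rw [pow_succ B m', mul_assoc, hBg]
  have hgc : g = Q ^ (m' + 1) * (B ^ m' * (Q ^ (m' + 1) * B ^ (m' + 1))) := by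
    conv_lhs => rw [← hgfix]
    rw [mul_assoc, hBmg]
  have hkey : g * (Q ^ (m' + 1) * B ^ (m' + 1)) = g := by
    conv_lhs => rw [hgc]
    calc (Q ^ (m' + 1) * (B ^ m' * (Q ^ (m' + 1) * B ^ (m' + 1)))) * (Q ^ (m' + 1) * B ^ (m' + 1))
        = Q ^ (m' + 1) * (B ^ m' * (Q ^ (m' + 1) * ((B ^ (m' + 1) * Q ^ (m' + 1)) * B ^ (m' + 1)))) := by
          simp only [mul_assoc]
      _ = Q ^ (m' + 1) * (B ^ m' * (Q ^ (m' + 1) * (Pk * B ^ (m' + 1)))) := by rw [fPkj m']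
      _ = Q ^ (m' + 1) * (B ^ m' * ((Q ^ (m' + 1) * Pk) * B ^ (m' + 1))) := by
          rw [← mul_assoc (Q ^ (m' + 1)) Pk (B ^ (m' + 1))]
      _ = Q ^ (m' + 1) * (B ^ m' * (Q ^ (m' + 1) * B ^ (m' + 1))) := by rw [fQmPk]
      _ = g := hgc.symm
  refine ⟨by rw [hBg]; exact hkey, ⟨Q ^ (m' + 1 + 1) * Q ^ m' * B ^ (m' + 1), ?_⟩⟩
  calc B * g = Q ^ (m' + 1) * B ^ (m' + 1) := hBg
    _ = (Q * Q ^ m') * B ^ (m' + 1) := by rw [pow_succ' Q m']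
    _ = ((B ^ (m' + 1) * Q ^ (m' + 1 + 1)) * Q ^ m') * B ^ (m' + 1) := by rw [← fQpow (m' + 1)]
    _ = B ^ (m' + 1) * (Q ^ (m' + 1 + 1) * Q ^ m' * B ^ (m' + 1)) := by simp only [mul_assoc]

theorem stmt_8 {p n : ℕ} (A : Matrix (Fin p) (Fin n) ℂ)
    (W : Matrix (Fin n) (Fin p) ℂ) (hW : W ≠ 0)
    (k₁ k₂ k m : ℕ) (hm : 0 < m)
    (hk₁ : MatIndex (A * W) k₁) (hk₂ : MatIndex (W * A) k₂)
    (hk : k = max k₁ k₂)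
    -- `Pk` is the orthogonal projector onto range((WA)^k)
    (Pk : Matrix (Fin n) (Fin n) ℂ)
    (hPk : IsOrthProjOnto Pk (LinearMap.range ((W * A) ^ k).mulVecLin))
    -- `Z` is the W-weighted core-EP inverse of `A`
    (Z : Matrix (Fin p) (Fin n) ℂ)
    (hZ1 : W * A * W * Z = Pk)
    (hZ2 : LinearMap.range Z.mulVecLin ≤ LinearMap.range ((A * W) ^ k).mulVecLin)
    -- `G` is the W-weighted m-weak group inverse of `A`
    (G : Matrix (Fin p) (Fin n) ℂ)
    (hG1 : A * W * G = (Z * W) ^ m * (A * W) ^ (m - 1) * A)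
    (hG2 : A * W * G * W * G = G)
    -- `P` is the orthogonal projector onto range((WA)^m)
    (P : Matrix (Fin n) (Fin n) ℂ)
    (hP : IsOrthProjOnto P (LinearMap.range ((W * A) ^ m).mulVecLin))
    -- `X` is the W-weighted m-weak core inverse of `A`
    (X : Matrix (Fin p) (Fin n) ℂ) (hX : X = G * P) :
    X * W * A * W * X = X := by
  obtain ⟨m', rfl⟩ : ∃ m', m = m' + 1 := ⟨m - 1, (Nat.succ_pred_eq_of_pos hm).symm⟩
  obtain ⟨hPk1, hPk2, hPk3⟩ := hPk
  obtain ⟨hP1, hP2, hP3⟩ := hP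
  simp only [Nat.add_sub_cancel] at hG1
  obtain ⟨T, hT⟩ := factor_of_range_le _ _ hZ2
  have hk₁k : k₁ ≤ k := hk ▸ le_max_left _ _
  -- B·Q = Pk
  have f1 : (W * A) * (W * Z) = Pk := by simpa only [Matrix.mul_assoc] using hZ1
  -- Pk·Q = Q
  have fQfac : W * Z = (W * A) ^ k * (W * T) := by
    rw [hT, ← Matrix.mul_assoc, swap_pow, Matrix.mul_assoc]
  have fRange : LinearMap.range ((W * A) ^ k).mulVecLin ≤ LinearMap.range Pk.mulVecLin :=
    hPk3.ge
  have f2 : Pk * (W * Z) = W * Z := by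
    rw [fQfac, ← Matrix.mul_assoc, proj_absorb hPk1 fRange]
  -- Q·Pk = Q  (uniqueness argument, uses the index hypothesis on AW)
  have hD : W * A * W * (Z * (1 - Pk)) = 0 := by
    calc W * A * W * (Z * (1 - Pk)) = (W * A * W * Z) * (1 - Pk) := by
          simp only [Matrix.mul_assoc]
      _ = Pk * (1 - Pk) := by rw [hZ1]
      _ = 0 := by rw [Matrix.mul_sub, Matrix.mul_one, hPk1, sub_self]
  have hDfac : Z * (1 - Pk) = (A * W) ^ k * (T * (1 - Pk)) := by
    rw [hT, Matrix.mul_assoc]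
  have h0 : (A * W) ^ (k + 1 + 1) * (T * (1 - Pk)) = 0 := by
    have e : (A * W) ^ (k + 1 + 1) = (A * W) * ((A * W) * (A * W) ^ k) := by
      rw [← pow_succ', ← pow_succ']
    calc (A * W) ^ (k + 1 + 1) * (T * (1 - Pk))
        = (A * W) * ((A * W) * ((A * W) ^ k * (T * (1 - Pk)))) := by
          rw [e]; simp only [Matrix.mul_assoc]
      _ = (A * W) * ((A * W) * (Z * (1 - Pk))) := by rw [← hDfac]
      _ = A * (W * A * W * (Z * (1 - Pk))) := by simp only [Matrix.mul_assoc]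
      _ = 0 := by rw [hD, Matrix.mul_zero]
  have hZ0 : Z * (1 - Pk) = 0 := by
    rw [hDfac]
    apply matrix_eq_zero_of_mulVec
    intro v
    have hv : ((A * W) ^ (k + 1 + 1)).mulVec ((T * (1 - Pk)).mulVec v) = 0 := by
      rw [Matrix.mulVec_mulVec, h0, Matrix.zero_mulVec]
    have hres := ker_pow_le' (A * W) k₁ k (k + 1 + 1) hk₁.1 hk₁k (by omega) _ hv
    rw [Matrix.mulVec_mulVec] at hres
    exact hres
  have hZPk : Z * Pk = Z := by
    rw [Matrix.mul_sub, Matrix.mul_one, sub_eq_zero] at hZ0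
    exact hZ0.symm
  have f3 : (W * Z) * Pk = W * Z := by rw [Matrix.mul_assoc, hZPk]
  -- B·g = Q^m·B^m
  have hWswap : W * (Z * W) ^ (m' + 1) = (W * Z) ^ (m' + 1) * W := swap_pow W Z (m' + 1)
  have hAswap : A * (W * A) ^ m' = (A * W) ^ m' * A := swap_pow A W m'
  have hBg : (W * A) * (W * G) = (W * Z) ^ (m' + 1) * (W * A) ^ (m' + 1) := by
    have h : W * (A * W * G) = W * ((Z * W) ^ (m' + 1) * (A * W) ^ m' * A) := by rw [hG1]
    calc (W * A) * (W * G) = W * (A * W * G) := by simp only [Matrix.mul_assoc]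
      _ = W * ((Z * W) ^ (m' + 1) * (A * W) ^ m' * A) := h
      _ = (W * (Z * W) ^ (m' + 1)) * ((A * W) ^ m' * A) := by simp only [Matrix.mul_assoc]
      _ = ((W * Z) ^ (m' + 1) * W) * (A * (W * A) ^ m') := by rw [hWswap, ← hAswap]
      _ = (W * Z) ^ (m' + 1) * ((W * A) * (W * A) ^ m') := by simp only [Matrix.mul_assoc]
      _ = (W * Z) ^ (m' + 1) * (W * A) ^ (m' + 1) := by rw [← pow_succ']
  have hgfix : (W * Z) ^ (m' + 1) * (W * A) ^ (m' + 1) * (W * G) = W * G := by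
    rw [← hBg]
    have h : W * (A * W * G * W * G) = W * G := by rw [hG2]
    simpa only [Matrix.mul_assoc] using h
  have hGA : A * ((W * G) * (W * G)) = G := by simpa only [Matrix.mul_assoc] using hG2
  obtain ⟨r1, C, hC⟩ := mono_main (W * A) (W * Z) Pk (W * G) m' f1 f2 f3 hBg hgfix
  -- P absorbs WAWG on the left
  have hPabs : P * ((W * A) * (W * G)) = (W * A) * (W * G) := by
    rw [hC]
    exact proj_absorb hP1 (le_trans (range_mul_le _ _) hP3.ge)
  -- G·(WAWG) = G
  have r1' : G * ((W * A) * (W * G)) = G := by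
    nth_rewrite 1 [← hGA]
    calc (A * ((W * G) * (W * G))) * ((W * A) * (W * G))
        = A * ((W * G) * ((W * G) * ((W * A) * (W * G)))) := by simp only [Matrix.mul_assoc]
      _ = A * ((W * G) * (W * G)) := by rw [r1]
      _ = G := hGA
  subst hX
  calc G * P * W * A * W * (G * P)
      = G * ((P * ((W * A) * (W * G))) * P) := by simp only [Matrix.mul_assoc]
    _ = G * (((W * A) * (W * G)) * P) := by rw [hPabs]
    _ = (G * ((W * A) * (W * G))) * P := by rw [← Matrix.mul_assoc]
    _ = G * P := by rw [r1']
end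

section
/- Let A be a p×n complex matrix, W a nonzero n×p complex matrix, and k = max{Ind(AW), Ind(WA)}. If X is the W-weighted m-weak core inverse of A, then range(X) = range((AW)^k). -/
open Matrix

namespace Stmt10Aux

/-- Matrices agreeing on all `mulVec`s are equal. -/
lemma eq_of_mulVec_eq {a b : ℕ} {M N : Matrix (Fin a) (Fin b) ℂ}
    (h : ∀ v, M *ᵥ v = N *ᵥ v) : M = N := by
  ext i j
  have := congrFun (h (Pi.single j 1)) i
  simpa using this

/-- Semiconjugation: `W * (A*W)^j = (W*A)^j * W`. -/
lemma semiconj {a b : ℕ} (A : Matrix (Fin a) (Fin b) ℂ) (W : Matrix (Fin b) (Fin a) ℂ) :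
    ∀ j : ℕ, W * (A * W) ^ j = (W * A) ^ j * W := by
  intro j
  induction j with
  | zero => simp
  | succ j ih =>
    calc W * (A * W) ^ (j + 1) = (W * (A * W) ^ j) * (A * W) := by
          rw [pow_succ, Matrix.mul_assoc]
      _ = ((W * A) ^ j * W) * (A * W) := by rw [ih]
      _ = (W * A) ^ (j + 1) * W := by rw [pow_succ]; simp only [Matrix.mul_assoc]

/-- An (orthogonal) projector onto `S` fixes any matrix whose range lies in `S`. -/
lemma absorb {q r : ℕ} {P : Matrix (Fin q) (Fin q) ℂ} {S : Submodule ℂ (Fin q → ℂ)}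
    (hP : IsOrthProjOnto P S) (M : Matrix (Fin q) (Fin r) ℂ)
    (hM : LinearMap.range M.mulVecLin ≤ S) : P * M = M := by
  obtain ⟨h1, -, h3⟩ := hP
  apply eq_of_mulVec_eq
  intro v
  have hmem : M *ᵥ v ∈ S := hM ⟨v, rfl⟩
  rw [← h3] at hmem
  obtain ⟨u, hu⟩ := hmem
  simp only [Matrix.mulVecLin_apply] at hu
  calc (P * M) *ᵥ v = P *ᵥ (M *ᵥ v) := by rw [Matrix.mulVec_mulVec]
    _ = P *ᵥ (P *ᵥ u) := by rw [hu]
    _ = (P * P) *ᵥ u := by rw [Matrix.mulVec_mulVec]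
    _ = P *ᵥ u := by rw [h1]
    _ = M *ᵥ v := hu

/-- Range inclusion gives a factorization. -/
lemma factor {a b c : ℕ} (M : Matrix (Fin a) (Fin c) ℂ) (N : Matrix (Fin a) (Fin b) ℂ)
    (h : LinearMap.range M.mulVecLin ≤ LinearMap.range N.mulVecLin) :
    ∃ T : Matrix (Fin b) (Fin c) ℂ, M = N * T := by
  choose t ht using fun i : Fin c => h ⟨Pi.single i 1, rfl⟩
  refine ⟨Matrix.of fun j i => t i j, ?_⟩
  ext r i
  have := congrFun (ht i) r
  simp only [Matrix.mulVecLin_apply, Matrix.mulVec_single, mul_one, MulOpposite.op_one, one_smul, Matrix.col_apply] at this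
  rw [← this]
  simp [Matrix.mul_apply, Matrix.mulVec, dotProduct]

lemma range_le_of_mul {a b c : ℕ} (N : Matrix (Fin a) (Fin b) ℂ)
    (M : Matrix (Fin b) (Fin c) ℂ) :
    LinearMap.range (N * M).mulVecLin ≤ LinearMap.range N.mulVecLin := by
  rw [Matrix.mulVecLin_mul]
  exact LinearMap.range_comp_le_range _ _

lemma range_mul_eq_map {q : ℕ} (M N : Matrix (Fin q) (Fin q) ℂ) :
    LinearMap.range (M * N).mulVecLin
      = Submodule.map M.mulVecLin (LinearMap.range N.mulVecLin) := by
  rw [Matrix.mulVecLin_mul, LinearMap.range_comp]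

/-- Once the rank of powers stabilizes, ranges of higher powers agree. -/
lemma range_pow_stab {q : ℕ} (M : Matrix (Fin q) (Fin q) ℂ) (s : ℕ)
    (h : (M ^ s).rank = (M ^ (s + 1)).rank) :
    ∀ j, s ≤ j →
      LinearMap.range ((M ^ j).mulVecLin) = LinearMap.range ((M ^ s).mulVecLin) := by
  have hle : LinearMap.range ((M ^ (s + 1)).mulVecLin)
      ≤ LinearMap.range ((M ^ s).mulVecLin) := by
    rw [pow_succ]
    exact range_le_of_mul _ _
  have h1 : LinearMap.range ((M ^ (s + 1)).mulVecLin)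
      = LinearMap.range ((M ^ s).mulVecLin) := by
    apply Submodule.eq_of_le_of_finrank_le hle
    unfold Matrix.rank at h
    exact le_of_eq h
  intro j hj
  induction j, hj using Nat.le_induction with
  | base => rfl
  | succ j hj ih =>
    rw [pow_succ', range_mul_eq_map, ih, ← range_mul_eq_map, ← pow_succ', h1]

end Stmt10Aux

open Stmt10Aux

theorem stmt_10 {p n : ℕ} (A : Matrix (Fin p) (Fin n) ℂ)
    (W : Matrix (Fin n) (Fin p) ℂ) (hW : W ≠ 0)
    (k₁ k₂ k m : ℕ) (hm : 0 < m)
    (hk₁ : MatIndex (A * W) k₁) (hk₂ : MatIndex (W * A) k₂)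
    (hk : k = max k₁ k₂)
    -- `Pk` is the orthogonal projector onto range((WA)^k)
    (Pk : Matrix (Fin n) (Fin n) ℂ)
    (hPk : IsOrthProjOnto Pk (LinearMap.range ((W * A) ^ k).mulVecLin))
    -- `Z` is the W-weighted core-EP inverse of `A`
    (Z : Matrix (Fin p) (Fin n) ℂ)
    (hZ1 : W * A * W * Z = Pk)
    (hZ2 : LinearMap.range Z.mulVecLin ≤ LinearMap.range ((A * W) ^ k).mulVecLin)
    -- `G` is the W-weighted m-weak group inverse of `A`
    (G : Matrix (Fin p) (Fin n) ℂ)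
    (hG1 : A * W * G = (Z * W) ^ m * (A * W) ^ (m - 1) * A)
    (hG2 : A * W * G * W * G = G)
    -- `P` is the orthogonal projector onto range((WA)^m)
    (P : Matrix (Fin n) (Fin n) ℂ)
    (hP : IsOrthProjOnto P (LinearMap.range ((W * A) ^ m).mulVecLin))
    -- `X` is the W-weighted m-weak core inverse of `A`
    (X : Matrix (Fin p) (Fin n) ℂ) (hX : X = G * P) :
    LinearMap.range X.mulVecLin = LinearMap.range ((A * W) ^ k).mulVecLin := by
  subst hX
  have hk1k : k₁ ≤ k := hk ▸ le_max_left _ _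
  -- abbreviations
  set B : Matrix (Fin p) (Fin p) ℂ := A * W with hB
  set C : Matrix (Fin n) (Fin n) ℂ := W * A with hC
  -- semiconjugation facts
  have hsW : ∀ j : ℕ, W * B ^ j = C ^ j * W := semiconj A W
  have hsA : ∀ j : ℕ, A * C ^ j = B ^ j * A := semiconj W A
  -- factor Z through B^k
  obtain ⟨T, hT⟩ := factor Z (B ^ k) hZ2
  -- G factors through Z
  have hZWm : (Z * W) ^ m = Z * (W * (Z * W) ^ (m - 1)) := by
    conv_lhs => rw [show m = (m - 1) + 1 from (Nat.succ_pred_eq_of_pos hm).symm]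
    rw [pow_succ']
    simp only [Matrix.mul_assoc]
  have hGfac : ∃ R : Matrix (Fin n) (Fin n) ℂ, G = Z * R := by
    refine ⟨W * (Z * W) ^ (m - 1) * ((A * W) ^ (m - 1) * (A * (W * G))), ?_⟩
    conv_lhs => rw [← hG2, hG1, hZWm]
    simp only [Matrix.mul_assoc]
    rfl
  -- range X ≤ range B^k
  have hle : LinearMap.range (G * P).mulVecLin ≤ LinearMap.range (B ^ k).mulVecLin := by
    obtain ⟨R, hR⟩ := hGfac
    have : G * P = B ^ k * (T * (R * P)) := by
      rw [hR, hT]; simp only [Matrix.mul_assoc]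
    rw [this]
    exact range_le_of_mul _ _
  -- key identity L0 : B * (B * (Z * W * B ^ k)) = B ^ (k+1)
  have habs : Pk * C ^ k = C ^ k :=
    absorb hPk _ (le_of_eq rfl)
  have hCk : C * (W * (Z * C ^ k)) = C ^ k := by
    have := congrArg (fun M => M * C ^ k) hZ1
    rw [habs] at this
    simp only [Matrix.mul_assoc] at this ⊢
    exact this
  have L0 : B * (B * (Z * (W * B ^ k))) = B ^ (k + 1) := by
    have := congrArg (fun M => A * M * W) hCk
    have lhs_eq : A * (C * (W * (Z * C ^ k))) * W = B * (B * (Z * (W * B ^ k))) := by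
      rw [hsW k]
      simp only [hB, hC, Matrix.mul_assoc]
    have rhs_eq : A * C ^ k * W = B ^ (k + 1) := by
      rw [hsA k, pow_succ, Matrix.mul_assoc]
    rw [lhs_eq, rhs_eq] at this
    exact this
  -- (Z*W)^s * B^k factors through B^k
  have hS : ∀ s : ℕ, ∃ S : Matrix (Fin p) (Fin p) ℂ,
      (Z * W) ^ s * B ^ k = B ^ k * S := by
    intro s
    induction s with
    | zero => exact ⟨1, by simp⟩
    | succ s ih =>
      obtain ⟨S, hSs⟩ := ih
      refine ⟨S * (T * (W * B ^ k)), ?_⟩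
      calc (Z * W) ^ (s + 1) * B ^ k = (Z * W) ^ s * (Z * W * B ^ k) := by
            rw [pow_succ]; simp only [Matrix.mul_assoc]
        _ = (Z * W) ^ s * (B ^ k * (T * (W * B ^ k))) := by
            rw [hT]; simp only [Matrix.mul_assoc]
        _ = ((Z * W) ^ s * B ^ k) * (T * (W * B ^ k)) := by
            simp only [Matrix.mul_assoc]
        _ = B ^ k * (S * (T * (W * B ^ k))) := by
            rw [hSs]; simp only [Matrix.mul_assoc]
  -- F : B^(s+1) * ((Z*W)^s * B^k) = B^(k+1)
  have F : ∀ s : ℕ, B ^ (s + 1) * ((Z * W) ^ s * B ^ k) = B ^ (k + 1) := by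
    intro s
    induction s with
    | zero => simp [pow_succ']
    | succ s ih =>
      obtain ⟨S, hSs⟩ := hS s
      calc B ^ (s + 2) * ((Z * W) ^ (s + 1) * B ^ k)
          = B ^ s * (B * (B * (Z * (W * ((Z * W) ^ s * B ^ k))))) := by
            rw [show s + 2 = s + 1 + 1 from rfl, pow_succ, pow_succ, pow_succ']
            simp only [Matrix.mul_assoc]
        _ = B ^ s * (B * (B * (Z * (W * (B ^ k * S))))) := by rw [hSs]
        _ = B ^ s * (B * (B * (Z * (W * B ^ k)) * S)) := by
            simp only [Matrix.mul_assoc]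
        _ = B ^ s * (B ^ (k + 1) * S) := by
            rw [← L0]; simp only [Matrix.mul_assoc]
        _ = B ^ s * (B * (B ^ k * S)) := by rw [pow_succ']; simp only [Matrix.mul_assoc]
        _ = B ^ s * (B * ((Z * W) ^ s * B ^ k)) := by rw [hSs]
        _ = B ^ (s + 1) * ((Z * W) ^ s * B ^ k) := by
            rw [pow_succ]; simp only [Matrix.mul_assoc]
        _ = B ^ (k + 1) := ih
  -- the P-projector absorbs C^(k+m)
  have habsP : P * C ^ (k + m) = C ^ (k + m) := by
    apply absorb hP
    have : C ^ (k + m) = C ^ m * C ^ k := by rw [← pow_add, Nat.add_comm]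
    rw [this]
    exact range_le_of_mul _ _
  -- main identity
  have main : B ^ (m + 2) * ((G * P) * (W * B ^ (k + m))) = B ^ (k + 2 * m + 1) := by
    have step1 : (G * P) * (W * B ^ (k + m)) = G * (W * B ^ (k + m)) := by
      rw [hsW (k + m)]
      calc G * P * (C ^ (k + m) * W) = G * ((P * C ^ (k + m)) * W) := by
            simp only [Matrix.mul_assoc]
        _ = G * (C ^ (k + m) * W) := by rw [habsP]
    rw [step1]
    -- B^(m+2) * G = B^(m+1) * (B * G) and B * G = (Z*W)^m * B^(m-1) * A
    have hBG : B * G = (Z * W) ^ m * B ^ (m - 1) * A := hG1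
    calc B ^ (m + 2) * (G * (W * B ^ (k + m)))
        = B ^ (m + 1) * ((B * G) * (W * B ^ (k + m))) := by
          rw [show m + 2 = m + 1 + 1 from rfl, pow_succ]
          simp only [Matrix.mul_assoc]
      _ = B ^ (m + 1) * ((Z * W) ^ m * B ^ (m - 1) * A * (W * B ^ (k + m))) := by
          rw [hBG]
      _ = B ^ (m + 1) * ((Z * W) ^ m * (B ^ (m - 1) * (B * B ^ (k + m)))) := by
          simp only [hB, Matrix.mul_assoc]
      _ = B ^ (m + 1) * ((Z * W) ^ m * (B ^ k * B ^ (2 * m))) := by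
          congr 2
          rw [← pow_succ', ← pow_add, ← pow_add]
          congr 1
          omega
      _ = B ^ (m + 1) * ((Z * W) ^ m * B ^ k) * B ^ (2 * m) := by
          simp only [Matrix.mul_assoc]
      _ = B ^ (k + 1) * B ^ (2 * m) := by rw [F m]
      _ = B ^ (k + 2 * m + 1) := by rw [← pow_add]; congr 1; omega
  -- rank comparison
  have hrank_stab := range_pow_stab B k₁ hk₁.1
  have hrange_eq : LinearMap.range ((B ^ (k + 2 * m + 1)).mulVecLin)
      = LinearMap.range ((B ^ k).mulVecLin) := by
    rw [hrank_stab (k + 2 * m + 1) (by omega), hrank_stab k hk1k]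
  have hrank_le : (B ^ k).rank ≤ (G * P).rank := by
    have h1 : (B ^ (k + 2 * m + 1)).rank ≤ ((G * P) * (W * B ^ (k + m))).rank := by
      rw [← main]
      exact Matrix.rank_mul_le_right _ _
    have h2 : ((G * P) * (W * B ^ (k + m))).rank ≤ (G * P).rank :=
      Matrix.rank_mul_le_left _ _
    have h3 : (B ^ (k + 2 * m + 1)).rank = (B ^ k).rank := by
      unfold Matrix.rank
      rw [hrange_eq]
    omega
  -- conclude
  apply Submodule.eq_of_le_of_finrank_le hle
  unfold Matrix.rank at hrank_le
  exact hrank_le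
end

section
/- Let A be a p×n complex matrix, W a nonzero n×p complex matrix, k = max{Ind(AW), Ind(WA)}, m a positive integer. Suppose X = A^{⊙_m,W} is the W-weighted m-weak core inverse. Then W·A·W·X is an idempotent p×p matrix (more precisely, WAWX is the projector onto range((WA)^k) along nullspace([(WA)^k]* (WA)^m P_{(WA)^m})). -/
open Matrix

private lemma aux_matEq {r s : ℕ} {M N : Matrix (Fin r) (Fin s) ℂ}
    (h : ∀ v, M *ᵥ v = N *ᵥ v) : M = N := by
  ext i j
  have := congrFun (h (Pi.single j 1)) i
  simpa using this

private lemma aux_range_mul_le {r s t : ℕ} (M : Matrix (Fin r) (Fin s) ℂ)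
    (N : Matrix (Fin s) (Fin t) ℂ) :
    LinearMap.range (M * N).mulVecLin ≤ LinearMap.range M.mulVecLin := by
  rw [Matrix.mulVecLin_mul, LinearMap.range_comp]
  rintro x ⟨y, -, rfl⟩
  exact ⟨y, rfl⟩

private lemma aux_range_mul_eq_map {r s t : ℕ} (M : Matrix (Fin r) (Fin s) ℂ)
    (N : Matrix (Fin s) (Fin t) ℂ) :
    LinearMap.range (M * N).mulVecLin
      = Submodule.map M.mulVecLin (LinearMap.range N.mulVecLin) := by
  rw [Matrix.mulVecLin_mul, LinearMap.range_comp]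

private lemma aux_absorb {r s : ℕ} {Q : Matrix (Fin r) (Fin r) ℂ} {N : Matrix (Fin r) (Fin s) ℂ}
    (hQ : Q * Q = Q) (h : LinearMap.range N.mulVecLin ≤ LinearMap.range Q.mulVecLin) :
    Q * N = N := by
  apply aux_matEq
  intro v
  obtain ⟨w, hw⟩ := h (LinearMap.mem_range_self _ v)
  simp only [Matrix.mulVecLin_apply] at hw
  rw [← Matrix.mulVec_mulVec, ← hw, Matrix.mulVec_mulVec, hQ, hw]

private lemma aux_pow_le {n : ℕ} {B : Matrix (Fin n) (Fin n) ℂ} {i j : ℕ} (h : i ≤ j) :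
    LinearMap.range (B ^ j).mulVecLin ≤ LinearMap.range (B ^ i).mulVecLin := by
  have : B ^ j = B ^ i * B ^ (j - i) := by rw [← pow_add]; congr 1; omega
  rw [this]; exact aux_range_mul_le _ _

private lemma aux_stab {n : ℕ} {B : Matrix (Fin n) (Fin n) ℂ} {s : ℕ}
    (h : (B ^ s).rank = (B ^ (s + 1)).rank) :
    ∀ j, s ≤ j → LinearMap.range (B ^ j).mulVecLin = LinearMap.range (B ^ s).mulVecLin := by
  have hfin : ∀ (M : Matrix (Fin n) (Fin n) ℂ),
      M.rank = Module.finrank ℂ (LinearMap.range M.mulVecLin) := fun _ => rfl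
  have base : LinearMap.range (B ^ (s + 1)).mulVecLin = LinearMap.range (B ^ s).mulVecLin :=
    Submodule.eq_of_le_of_finrank_le (aux_pow_le (Nat.le_succ s))
      (by rw [← hfin, ← hfin]; exact h.le)
  intro j hj
  induction j with
  | zero =>
    have hs : s = 0 := by omega
    rw [hs]
  | succ j ih =>
    rcases Nat.lt_or_ge j s with hlt | hge
    · have hs : s = j + 1 := by omega
      rw [hs]
    · have h1 : B ^ (j + 1) = B * B ^ j := by rw [pow_succ']
      have h2 : B ^ (s + 1) = B * B ^ s := by rw [pow_succ']
      rw [h1, aux_range_mul_eq_map, ih hge, ← aux_range_mul_eq_map, ← h2, base]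

private lemma aux_inj {n : ℕ} {B : Matrix (Fin n) (Fin n) ℂ} {k : ℕ}
    (hrank : (B ^ k).rank = (B ^ (k + 1)).rank)
    {u : Fin n → ℂ} (hu : u ∈ LinearMap.range (B ^ k).mulVecLin)
    (h0 : B *ᵥ u = 0) : u = 0 := by
  set S := LinearMap.range (B ^ k).mulVecLin with hS
  set g := B.mulVecLin.domRestrict S with hg
  have hrg : LinearMap.range g = LinearMap.range (B ^ (k + 1)).mulVecLin := by
    rw [hg, LinearMap.range_domRestrict, hS, ← aux_range_mul_eq_map, ← pow_succ']
  have hfin : ∀ (M : Matrix (Fin n) (Fin n) ℂ),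
      M.rank = Module.finrank ℂ (LinearMap.range M.mulVecLin) := fun _ => rfl
  have hrn := LinearMap.finrank_range_add_finrank_ker g
  rw [hrg] at hrn
  have hker : Module.finrank ℂ (LinearMap.ker g) = 0 := by
    rw [← hfin] at hrn
    rw [← hrank] at hrn
    have : Matrix.rank (B ^ k) = Module.finrank ℂ S := hfin _
    omega
  have hbot : LinearMap.ker g = ⊥ := Submodule.finrank_eq_zero.mp hker
  have hmem : (⟨u, hu⟩ : S) ∈ LinearMap.ker g := by
    rw [LinearMap.mem_ker, hg, LinearMap.domRestrict_apply, Matrix.mulVecLin_apply]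
    exact h0
  rw [hbot, Submodule.mem_bot] at hmem
  exact congrArg Subtype.val hmem

private lemma aux_zero_of_inj {n r : ℕ} {B : Matrix (Fin n) (Fin n) ℂ} {k : ℕ}
    (hrank : (B ^ k).rank = (B ^ (k + 1)).rank)
    {D : Matrix (Fin n) (Fin r) ℂ}
    (hr : LinearMap.range D.mulVecLin ≤ LinearMap.range (B ^ k).mulVecLin)
    (h0 : B * D = 0) : D = 0 := by
  apply aux_matEq
  intro v
  simp only [Matrix.zero_mulVec]
  refine aux_inj hrank (hr (LinearMap.mem_range_self _ v)) ?_
  rw [Matrix.mulVec_mulVec, h0, Matrix.zero_mulVec]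

private lemma aux_shift {r s : ℕ} (U : Matrix (Fin r) (Fin s) ℂ) (V : Matrix (Fin s) (Fin r) ℂ)
    (j : ℕ) : U * (V * U) ^ j = (U * V) ^ j * U := by
  induction j with
  | zero => simp
  | succ j ih =>
    rw [pow_succ, pow_succ, ← Matrix.mul_assoc, ih]
    simp only [Matrix.mul_assoc]

private lemma aux_range_sub_le {r s : ℕ} {M N : Matrix (Fin r) (Fin s) ℂ}
    {S : Submodule ℂ (Fin r → ℂ)}
    (hM : LinearMap.range M.mulVecLin ≤ S) (hN : LinearMap.range N.mulVecLin ≤ S) :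
    LinearMap.range (M - N).mulVecLin ≤ S := by
  rintro x ⟨v, rfl⟩
  rw [Matrix.mulVecLin_apply, Matrix.sub_mulVec]
  exact Submodule.sub_mem _ (hM ⟨v, Matrix.mulVecLin_apply _ _⟩)
    (hN ⟨v, Matrix.mulVecLin_apply _ _⟩)

private lemma aux_star_dot {r : ℕ} {v : Fin r → ℂ} (h : star v ⬝ᵥ v = 0) : v = 0 := by
  have h1 : ∑ i, (Complex.normSq (v i) : ℂ) = 0 := by
    rw [← h]
    simp [dotProduct, Complex.normSq_eq_conj_mul_self]
  have h2 : ∑ i, Complex.normSq (v i) = 0 := by exact_mod_cast h1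
  funext i
  have h3 := (Finset.sum_eq_zero_iff_of_nonneg
    (fun i _ => Complex.normSq_nonneg (v i))).mp h2 i (Finset.mem_univ i)
  simpa using Complex.normSq_eq_zero.mp h3

private lemma main_aux {n : ℕ} (B Y Pk P : Matrix (Fin n) (Fin n) ℂ) (k m : ℕ) (hm : 0 < m)
    (hrankk : (B ^ k).rank = (B ^ (k + 1)).rank)
    (hkm : LinearMap.range (B ^ k).mulVecLin ≤ LinearMap.range (B ^ m).mulVecLin)
    (hPk1 : Pk * Pk = Pk) (hPk2 : Pkᴴ = Pk)
    (hPk3 : LinearMap.range Pk.mulVecLin = LinearMap.range (B ^ k).mulVecLin)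
    (hP1 : P * P = P)
    (hP3 : LinearMap.range P.mulVecLin = LinearMap.range (B ^ m).mulVecLin)
    (hBY : B * Y = Pk)
    (hrY : LinearMap.range Y.mulVecLin ≤ LinearMap.range (B ^ k).mulVecLin) :
    (Y ^ m * B ^ m * P) * (Y ^ m * B ^ m * P) = Y ^ m * B ^ m * P ∧
    LinearMap.range (Y ^ m * B ^ m * P).mulVecLin = LinearMap.range (B ^ k).mulVecLin ∧
    LinearMap.ker (Y ^ m * B ^ m * P).mulVecLin
      = LinearMap.ker ((B ^ k)ᴴ * B ^ m * P).mulVecLin := by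
  have hYm : Y ^ m = Y ^ (m - 1) * Y := by
    rw [← pow_succ, Nat.sub_add_cancel hm]
  have hYm' : Y ^ m = Y * Y ^ (m - 1) := by
    rw [← pow_succ', Nat.sub_add_cancel hm]
  have hrYm : LinearMap.range (Y ^ m).mulVecLin ≤ LinearMap.range (B ^ k).mulVecLin := by
    rw [hYm']; exact (aux_range_mul_le _ _).trans hrY
  have hPkY : Pk * Y = Y := aux_absorb hPk1 (by rw [hPk3]; exact hrY)
  have hYBY : Y * B * Y = Y := by
    have hD : B * (Y * B * Y - Y) = 0 := by
      have h1 : B * (Y * B * Y) = Pk := by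
        rw [← mul_assoc, ← mul_assoc, hBY, mul_assoc, hBY, hPk1]
      rw [mul_sub, h1, hBY, sub_self]
    have hrD : LinearMap.range (Y * B * Y - Y).mulVecLin
        ≤ LinearMap.range (B ^ k).mulVecLin :=
      aux_range_sub_le ((aux_range_mul_le _ _).trans ((aux_range_mul_le _ _).trans hrY)) hrY
    exact sub_eq_zero.mp (aux_zero_of_inj hrankk hrD hD)
  have hYPk : Y * Pk = Y := by rw [← hBY, ← mul_assoc, hYBY]
  have hpow : ∀ j : ℕ, B ^ (j + 1) * Y ^ (j + 1) = Pk := by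
    intro j
    induction j with
    | zero => simpa using hBY
    | succ j ih =>
      have hPkYj : Pk * Y ^ (j + 1) = Y ^ (j + 1) := by
        rw [pow_succ', ← mul_assoc, hPkY]
      rw [pow_succ, pow_succ' Y (j + 1), mul_assoc (B ^ (j + 1)) B,
        ← mul_assoc B Y, hBY, hPkYj]
      exact ih
  have hBmYm : B ^ m * Y ^ m = Pk := by
    have h := hpow (m - 1)
    rwa [Nat.sub_add_cancel hm] at h
  have hYmPk : Y ^ m * Pk = Y ^ m := by
    rw [hYm, mul_assoc, hYPk, ← hYm]
  have hPYm : P * Y ^ m = Y ^ m := aux_absorb hP1 (by rw [hP3]; exact hrYm.trans hkm)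
  have hPBk : P * B ^ k = B ^ k := aux_absorb hP1 (by rw [hP3]; exact hkm)
  have hPkBk1 : Pk * B ^ (k + 1) = B ^ (k + 1) :=
    aux_absorb hPk1 (by rw [hPk3]; exact aux_pow_le (Nat.le_succ k))
  have hYBk1 : Y * B ^ (k + 1) = B ^ k := by
    have hD : B * (Y * B ^ (k + 1) - B ^ k) = 0 := by
      rw [mul_sub, ← mul_assoc, hBY, hPkBk1, ← pow_succ', sub_self]
    have hrD : LinearMap.range (Y * B ^ (k + 1) - B ^ k).mulVecLin
        ≤ LinearMap.range (B ^ k).mulVecLin :=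
      aux_range_sub_le ((aux_range_mul_le _ _).trans hrY) le_rfl
    exact sub_eq_zero.mp (aux_zero_of_inj hrankk hrD hD)
  have hYjB : ∀ j : ℕ, Y ^ j * B ^ (k + j) = B ^ k := by
    intro j
    induction j with
    | zero => simp
    | succ j ih =>
      have h1 : B ^ (k + (j + 1)) = B ^ (k + 1) * B ^ j := by
        rw [← pow_add]; congr 1; omega
      rw [h1, pow_succ, mul_assoc (Y ^ j) Y, ← mul_assoc Y, hYBk1, ← pow_add]
      exact ih
  have hPkBk : Pk * B ^ k = B ^ k := aux_absorb hPk1 hPk3.ge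
  have hBkHPk : (B ^ k)ᴴ * Pk = (B ^ k)ᴴ := by
    have h := congrArg Matrix.conjTranspose hPkBk
    rwa [Matrix.conjTranspose_mul, hPk2] at h
  refine ⟨?_, ?_, ?_⟩
  · calc (Y ^ m * B ^ m * P) * (Y ^ m * B ^ m * P)
        = Y ^ m * B ^ m * (P * Y ^ m) * (B ^ m * P) := by simp only [mul_assoc]
      _ = Y ^ m * (B ^ m * Y ^ m) * (B ^ m * P) := by rw [hPYm]; simp only [mul_assoc]
      _ = Y ^ m * Pk * (B ^ m * P) := by rw [hBmYm]
      _ = Y ^ m * (B ^ m * P) := by rw [hYmPk]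
      _ = Y ^ m * B ^ m * P := by rw [← mul_assoc]
  · have hle : LinearMap.range (Y ^ m * B ^ m * P).mulVecLin
        ≤ LinearMap.range (B ^ k).mulVecLin :=
      (aux_range_mul_le _ _).trans ((aux_range_mul_le _ _).trans hrYm)
    have hQBk : (Y ^ m * B ^ m * P) * B ^ k = B ^ k := by
      rw [mul_assoc, hPBk, mul_assoc, ← pow_add, Nat.add_comm m k]
      exact hYjB m
    have hge : LinearMap.range (B ^ k).mulVecLin
        ≤ LinearMap.range (Y ^ m * B ^ m * P).mulVecLin := by
      conv_lhs => rw [← hQBk]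
      exact aux_range_mul_le _ _
    exact le_antisymm hle hge
  · ext v
    simp only [LinearMap.mem_ker, Matrix.mulVecLin_apply]
    constructor
    · intro hv
      have h1 : Pk *ᵥ ((B ^ m * P) *ᵥ v) = 0 := by
        have h2 : B ^ m *ᵥ ((Y ^ m * B ^ m * P) *ᵥ v) = 0 := by
          rw [hv, Matrix.mulVec_zero]
        rw [Matrix.mulVec_mulVec] at h2
        have he : B ^ m * (Y ^ m * B ^ m * P) = Pk * (B ^ m * P) := by
          calc B ^ m * (Y ^ m * B ^ m * P)
              = (B ^ m * Y ^ m) * (B ^ m * P) := by simp only [mul_assoc]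
            _ = Pk * (B ^ m * P) := by rw [hBmYm]
        rw [he, ← Matrix.mulVec_mulVec] at h2
        exact h2
      have h2 : (B ^ k)ᴴ *ᵥ ((B ^ m * P) *ᵥ v) = 0 := by
        have h3 : (B ^ k)ᴴ *ᵥ ((B ^ m * P) *ᵥ v)
            = ((B ^ k)ᴴ * Pk) *ᵥ ((B ^ m * P) *ᵥ v) := by rw [hBkHPk]
        rw [h3, ← Matrix.mulVec_mulVec, h1, Matrix.mulVec_zero]
      rw [mul_assoc, ← Matrix.mulVec_mulVec]
      exact h2
    · intro hv
      have h0 : (B ^ k)ᴴ *ᵥ ((B ^ m * P) *ᵥ v) = 0 := by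
        rw [Matrix.mulVec_mulVec, ← mul_assoc]
        exact hv
      have h1 : Pk *ᵥ ((B ^ m * P) *ᵥ v) = 0 := by
        obtain ⟨c, hc⟩ : Pk *ᵥ ((B ^ m * P) *ᵥ v) ∈ LinearMap.range (B ^ k).mulVecLin := by
          rw [← hPk3]
          exact ⟨(B ^ m * P) *ᵥ v, Matrix.mulVecLin_apply _ _⟩
        have hc' : (B ^ k) *ᵥ c = Pk *ᵥ ((B ^ m * P) *ᵥ v) := by
          rw [← Matrix.mulVecLin_apply]; exact hc
        have hd : star (Pk *ᵥ ((B ^ m * P) *ᵥ v)) ⬝ᵥ (Pk *ᵥ ((B ^ m * P) *ᵥ v)) = 0 := by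
          nth_rewrite 1 [← hc']
          rw [Matrix.star_mulVec, ← Matrix.dotProduct_mulVec, Matrix.mulVec_mulVec,
            hBkHPk, h0, dotProduct_zero]
        exact aux_star_dot hd
      have h2 : B *ᵥ (Y *ᵥ ((B ^ m * P) *ᵥ v)) = 0 := by
        rw [Matrix.mulVec_mulVec, hBY]
        exact h1
      have h3 : Y *ᵥ ((B ^ m * P) *ᵥ v) = 0 :=
        aux_inj hrankk (hrY ⟨(B ^ m * P) *ᵥ v, Matrix.mulVecLin_apply _ _⟩) h2
      have h4 : (Y ^ m * B ^ m * P) *ᵥ v = Y ^ (m - 1) *ᵥ (Y *ᵥ ((B ^ m * P) *ᵥ v)) := by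
        calc (Y ^ m * B ^ m * P) *ᵥ v = (Y ^ m * (B ^ m * P)) *ᵥ v := by rw [mul_assoc]
          _ = Y ^ m *ᵥ ((B ^ m * P) *ᵥ v) := by rw [← Matrix.mulVec_mulVec]
          _ = (Y ^ (m - 1) * Y) *ᵥ ((B ^ m * P) *ᵥ v) := by rw [← hYm]
          _ = Y ^ (m - 1) *ᵥ (Y *ᵥ ((B ^ m * P) *ᵥ v)) := by rw [← Matrix.mulVec_mulVec]
      rw [h4, h3, Matrix.mulVec_zero]

theorem stmt_13 {p n : ℕ} (A : Matrix (Fin p) (Fin n) ℂ)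
    (W : Matrix (Fin n) (Fin p) ℂ) (hW : W ≠ 0)
    (k₁ k₂ k m : ℕ) (hm : 0 < m)
    (hk₁ : MatIndex (A * W) k₁) (hk₂ : MatIndex (W * A) k₂)
    (hk : k = max k₁ k₂)
    -- `Pk` is the orthogonal projector onto range((WA)^k)
    (Pk : Matrix (Fin n) (Fin n) ℂ)
    (hPk : IsOrthProjOnto Pk (LinearMap.range ((W * A) ^ k).mulVecLin))
    -- `Z` is the W-weighted core-EP inverse of `A`
    (Z : Matrix (Fin p) (Fin n) ℂ)
    (hZ1 : W * A * W * Z = Pk)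
    (hZ2 : LinearMap.range Z.mulVecLin ≤ LinearMap.range ((A * W) ^ k).mulVecLin)
    -- `G` is the W-weighted m-weak group inverse of `A`
    (G : Matrix (Fin p) (Fin n) ℂ)
    (hG1 : A * W * G = (Z * W) ^ m * (A * W) ^ (m - 1) * A)
    (hG2 : A * W * G * W * G = G)
    -- `P` is the orthogonal projector onto range((WA)^m)
    (P : Matrix (Fin n) (Fin n) ℂ)
    (hP : IsOrthProjOnto P (LinearMap.range ((W * A) ^ m).mulVecLin))
    -- `X` is the W-weighted m-weak core inverse of `A`
    (X : Matrix (Fin p) (Fin n) ℂ) (hX : X = G * P) :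
    (W * A * W * X) * (W * A * W * X) = W * A * W * X ∧
    LinearMap.range (W * A * W * X).mulVecLin =
      LinearMap.range ((W * A) ^ k).mulVecLin ∧
    LinearMap.ker (W * A * W * X).mulVecLin =
      LinearMap.ker (((W * A) ^ k)ᴴ * (W * A) ^ m * P).mulVecLin := by
  obtain ⟨hPk1, hPk2, hPk3⟩ := hPk
  obtain ⟨hP1, hP2, hP3⟩ := hP
  have hk2le : k₂ ≤ k := hk ▸ le_max_right k₁ k₂
  have hstab := aux_stab hk₂.1
  have hkm : LinearMap.range ((W * A) ^ k).mulVecLin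
      ≤ LinearMap.range ((W * A) ^ m).mulVecLin := by
    rcases le_or_gt m k with h | h
    · exact aux_pow_le h
    · rw [hstab m (by omega), hstab k hk2le]
  have hfin : ∀ (M : Matrix (Fin n) (Fin n) ℂ),
      M.rank = Module.finrank ℂ (LinearMap.range M.mulVecLin) := fun _ => rfl
  have hrankk : ((W * A) ^ k).rank = ((W * A) ^ (k + 1)).rank := by
    rw [hfin, hfin, hstab k hk2le, hstab (k + 1) (by omega)]
  have hBY : (W * A) * (W * Z) = Pk := by
    rw [← Matrix.mul_assoc]; exact hZ1
  have hrY : LinearMap.range (W * Z).mulVecLin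
      ≤ LinearMap.range ((W * A) ^ k).mulVecLin := by
    have h1 : LinearMap.range (W * Z).mulVecLin
        ≤ LinearMap.range (W * (A * W) ^ k).mulVecLin := by
      rw [aux_range_mul_eq_map, aux_range_mul_eq_map]
      exact Submodule.map_mono hZ2
    rw [aux_shift W A k] at h1
    exact h1.trans (aux_range_mul_le _ _)
  have hG1' : W * A * W * G = (W * Z) ^ m * (W * A) ^ m := by
    calc W * A * W * G = W * (A * W * G) := by simp only [Matrix.mul_assoc]
      _ = W * ((Z * W) ^ m * (A * W) ^ (m - 1) * A) := by rw [hG1]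
      _ = (W * (Z * W) ^ m) * ((A * W) ^ (m - 1) * A) := by simp only [Matrix.mul_assoc]
      _ = ((W * Z) ^ m * W) * ((A * W) ^ (m - 1) * A) := by rw [aux_shift]
      _ = (W * Z) ^ m * ((W * (A * W) ^ (m - 1)) * A) := by simp only [Matrix.mul_assoc]
      _ = (W * Z) ^ m * (((W * A) ^ (m - 1) * W) * A) := by rw [aux_shift]
      _ = (W * Z) ^ m * ((W * A) ^ (m - 1) * (W * A)) := by simp only [Matrix.mul_assoc]
      _ = (W * Z) ^ m * (W * A) ^ m := by rw [← pow_succ, Nat.sub_add_cancel hm]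
  have hQ : W * A * W * X = (W * Z) ^ m * (W * A) ^ m * P := by
    rw [hX, ← Matrix.mul_assoc, hG1']
  rw [hQ]
  exact main_aux (W * A) (W * Z) Pk P k m hm hrankk hkm hPk1 hPk2 hPk3 hP1 hP3 hBY hrY
end

section
/- Let A be an n×n complex matrix of index k and m a positive integer. Suppose X satisfies A·X = (A^⊕)^m · A^m · P_{A^m} and A·X² = X, where A^⊕ is the core-EP inverse of A and P_{A^m} the orthogonal projector onto range(A^m). Then range(X) ⊆ range(A^k), and X is the unique matrix satisfying these two conditions (i.e., any two solutions coincide). -/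
open Matrix

theorem stmt_19 {n : ℕ} (A : Matrix (Fin n) (Fin n) ℂ) (k m : ℕ)
    (hk : MatIndex A k) (hm : 0 < m)
    -- `E` is the core-EP inverse of `A`
    (E : Matrix (Fin n) (Fin n) ℂ)
    (hE1 : E * A * E = E)
    (hE2 : LinearMap.range E.mulVecLin = LinearMap.range (A ^ k).mulVecLin)
    (hE3 : LinearMap.range Eᴴ.mulVecLin = LinearMap.range (A ^ k).mulVecLin)
    -- `P` is the orthogonal projector onto range(A^m)
    (P : Matrix (Fin n) (Fin n) ℂ)
    (hP : IsOrthProjOnto P (LinearMap.range (A ^ m).mulVecLin))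
    (X : Matrix (Fin n) (Fin n) ℂ)
    (hX1 : A * X = E ^ m * A ^ m * P) (hX2 : A * X ^ 2 = X) :
    LinearMap.range X.mulVecLin ≤ LinearMap.range (A ^ k).mulVecLin ∧
    ∀ X' : Matrix (Fin n) (Fin n) ℂ,
      A * X' = E ^ m * A ^ m * P → A * X' ^ 2 = X' → X' = X := by
  set S := LinearMap.range (A ^ k).mulVecLin with hS
  -- range of product
  have hmul : ∀ (B C : Matrix (Fin n) (Fin n) ℂ),
      LinearMap.range (B * C).mulVecLin ≤ LinearMap.range B.mulVecLin := by
    intro B C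
    rw [Matrix.mulVecLin_mul]
    exact LinearMap.range_comp_le_range _ _
  -- iteration: any solution Y of A Y² = Y satisfies Y = A^ℓ Y^{ℓ+1}
  have key : ∀ Y : Matrix (Fin n) (Fin n) ℂ, A * Y ^ 2 = Y →
      ∀ ℓ : ℕ, Y = A ^ ℓ * Y ^ (ℓ + 1) := by
    intro Y hY ℓ
    induction ℓ with
    | zero => simp
    | succ ℓ ih =>
      calc Y = A * Y ^ 2 := hY.symm
        _ = A * (Y * Y) := by rw [sq]
        _ = A * ((A ^ ℓ * Y ^ (ℓ + 1)) * Y) := by rw [← ih]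
        _ = (A * A ^ ℓ) * (Y ^ (ℓ + 1) * Y) := by
            simp only [mul_assoc]
        _ = A ^ (ℓ + 1) * Y ^ (ℓ + 2) := by
            rw [← pow_succ', ← pow_succ]
  have rangeY : ∀ Y : Matrix (Fin n) (Fin n) ℂ, A * Y ^ 2 = Y →
      LinearMap.range Y.mulVecLin ≤ S := by
    intro Y hY
    have h := key Y hY k
    rw [h]
    exact hmul _ _
  -- range A^{k+1} = range A^k
  have hle : LinearMap.range (A ^ (k + 1)).mulVecLin ≤ S := by
    have := hmul (A ^ k) A
    rwa [← pow_succ] at this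
  have heq : LinearMap.range (A ^ (k + 1)).mulVecLin = S :=
    Submodule.eq_of_le_of_finrank_eq hle hk.1.symm
  -- A is injective on S
  have hinj : ∀ v : Fin n → ℂ, v ∈ S → A.mulVec v = 0 → v = 0 := by
    intro v hv hAv
    set f : S →ₗ[ℂ] (Fin n → ℂ) := A.mulVecLin.comp S.subtype with hf
    have hrange : LinearMap.range f = S := by
      rw [hf, LinearMap.range_comp, Submodule.range_subtype, hS,
        ← LinearMap.range_comp, ← Matrix.mulVecLin_mul, ← pow_succ']
      exact heq
    have hrn := LinearMap.finrank_range_add_finrank_ker f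
    rw [hrange] at hrn
    have hker : Module.finrank ℂ (LinearMap.ker f) = 0 := by omega
    have hbot : LinearMap.ker f = ⊥ := Submodule.finrank_eq_zero.mp hker
    have : (⟨v, hv⟩ : S) ∈ LinearMap.ker f := by
      simp [hf, Matrix.mulVecLin, hAv]
    rw [hbot, Submodule.mem_bot] at this
    exact congrArg Subtype.val this
  refine ⟨rangeY X hX2, ?_⟩
  intro X' hX1' hX2'
  -- A * (X' - X) = 0
  have hA0 : A * (X' - X) = 0 := by
    rw [mul_sub, hX1, hX1', sub_self]
  have hzero : ∀ v : Fin n → ℂ, (X' - X).mulVec v = 0 := by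
    intro v
    apply hinj
    · have h1 : X'.mulVec v ∈ S := rangeY X' hX2' ⟨v, rfl⟩
      have h2 : X.mulVec v ∈ S := rangeY X hX2 ⟨v, rfl⟩
      rw [Matrix.sub_mulVec]
      exact S.sub_mem h1 h2
    · rw [Matrix.mulVec_mulVec, hA0, Matrix.zero_mulVec]
  have hd : X' - X = 0 := by
    ext i j
    have h := congrFun (hzero (Pi.single j 1)) i
    simpa [Matrix.mulVec_single] using h
  exact sub_eq_zero.mp hd
end
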